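/- Let a ∈ (0,1), let f : ℝ → [0,∞) be measurable with f̃(x) = e^{(1−a)x²/(2a)}·f(x) satisfying sup_{z∈ℝ} ∫_{z−1/2}^{z+1/2} f̃(ax) dx ≤ C₀ < ∞, and let φ : ℝ → ℂ be measurable with ∫_ℝ |φ(y)|·e^{−(1−a)y²/2} dy < ∞. Then the double integral ∫∫ f(x)·sign(x − ay)·exp(−(x−y)²/2)·φ(y) dx dy is absolutely convergent, and consequently ∫_ℝ T_a[f](y)·φ(y) dy = ∫_ℝ f(x)·(∫_ℝ sign(x − ay)·exp(−(x−y)²/2)·φ(y) dy) dx. -/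

import Mathlib

open MeasureTheory Real

lemma measurable_realSign : Measurable Real.sign := by
  have : Real.sign = fun x : ℝ => if x < 0 then (-1 : ℝ) else if 0 < x then 1 else 0 :=
    funext fun x => rfl
  rw [this]
  exact Measurable.ite (measurableSet_lt measurable_id measurable_const) measurable_const
    (Measurable.ite (measurableSet_lt measurable_const measurable_id) measurable_const
      measurable_const)

lemma abs_realSign_le_one (x : ℝ) : |Real.sign x| ≤ 1 := by
  rcases lt_trichotomy x 0 with h | h | h
  · rw [Real.sign_of_neg h]; norm_num
  · rw [h, Real.sign_zero]; norm_num
  · rw [Real.sign_of_pos h]; norm_num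

lemma cov_scale {a : ℝ} (ha : 0 < a) (g : ℝ → ENNReal) (hg : Measurable g) :
    ∫⁻ x : ℝ, g x = ENNReal.ofReal a * ∫⁻ u : ℝ, g (a * u) := by
  have h1 : ∫⁻ u : ℝ, g (a * u) = ∫⁻ x, g x ∂(Measure.map (a * ·) volume) :=
    (lintegral_map hg (measurable_const_mul a)).symm
  rw [h1, Real.map_volume_mul_left ha.ne', lintegral_smul_measure, smul_eq_mul, ← mul_assoc,
    abs_of_pos (inv_pos.2 ha), ← ENNReal.ofReal_mul ha.le, mul_inv_cancel₀ ha.ne',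
    ENNReal.ofReal_one, one_mul]

noncomputable def eK (a : ℝ) : ENNReal :=
  ∑' k : ℤ, ENNReal.ofReal (Real.exp (-(a * min ((k : ℝ) ^ 2) (((k : ℝ) + 1) ^ 2)) / 2))

lemma eK_lt_top {a : ℝ} (ha : 0 < a) : eK a < ⊤ := by
  have hmin : ∀ k : ℤ, |(k : ℝ)| - 1 ≤ min ((k : ℝ) ^ 2) (((k : ℝ) + 1) ^ 2) := by
    intro k
    rcases le_or_gt 0 k with hk | hk
    · have hk' : (0 : ℝ) ≤ (k : ℝ) := by exact_mod_cast hk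
      rw [abs_of_nonneg hk']
      refine le_min (by nlinarith) (by nlinarith)
    · have hkk : k ≤ -1 := by omega
      have hk' : (k : ℝ) ≤ -1 := by exact_mod_cast hkk
      rw [abs_of_nonpos (by linarith)]
      refine le_min (by nlinarith) ?_
      rcases le_or_gt k (-2) with h2 | h2
      · have h2' : (k : ℝ) ≤ -2 := by exact_mod_cast h2
        nlinarith
      · have : k = -1 := by omega
        subst this; norm_num
  set r : ℝ := Real.exp (-(a / 2)) with hr
  have hr1 : r < 1 := Real.exp_lt_one_iff.2 (by linarith)
  have hr0 : 0 ≤ r := Real.exp_nonneg _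
  have hle : ∀ k : ℤ,
      Real.exp (-(a * min ((k : ℝ) ^ 2) (((k : ℝ) + 1) ^ 2)) / 2)
        ≤ Real.exp (a / 2) * r ^ k.natAbs := by
    intro k
    have : Real.exp (a / 2) * r ^ k.natAbs = Real.exp (a / 2 + (-(a / 2)) * k.natAbs) := by
      rw [Real.exp_add, ← Real.exp_nat_mul, mul_comm ((k.natAbs : ℝ)) _]
    rw [this]
    apply Real.exp_le_exp.2
    have habs : (k.natAbs : ℝ) = |(k : ℝ)| := by
      rw [Nat.cast_natAbs]; push_cast; ring
    have := hmin k
    rw [habs]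
    have hmin0 : 0 ≤ min ((k : ℝ) ^ 2) (((k : ℝ) + 1) ^ 2) := le_min (sq_nonneg _) (sq_nonneg _)
    nlinarith
  have hsum : Summable fun k : ℤ =>
      Real.exp (-(a * min ((k : ℝ) ^ 2) (((k : ℝ) + 1) ^ 2)) / 2) := by
    have hgeo : Summable fun k : ℤ => Real.exp (a / 2) * r ^ k.natAbs := by
      apply Summable.of_nat_of_neg
      · simpa using (summable_geometric_of_lt_one hr0 hr1).mul_left (Real.exp (a / 2))
      · simpa using (summable_geometric_of_lt_one hr0 hr1).mul_left (Real.exp (a / 2))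
    exact Summable.of_nonneg_of_le (fun k => Real.exp_nonneg _) hle hgeo
  rw [eK, ← ENNReal.ofReal_tsum_of_nonneg (fun k => Real.exp_nonneg _) hsum]
  exact ENNReal.ofReal_lt_top

lemma interval_sq_bound (k : ℤ) (t : ℝ) (h1 : (k : ℝ) ≤ t) (h2 : t < (k : ℝ) + 1) :
    min ((k : ℝ) ^ 2) (((k : ℝ) + 1) ^ 2) ≤ t ^ 2 := by
  rcases le_or_gt 0 k with hk | hk
  · have hk' : (0 : ℝ) ≤ (k : ℝ) := by exact_mod_cast hk
    have : (k : ℝ) ^ 2 ≤ t ^ 2 := by nlinarith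
    exact le_trans (min_le_left _ _) this
  · have hk' : (k : ℝ) + 1 ≤ 0 := by
      have : k + 1 ≤ 0 := by omega
      exact_mod_cast this
    have : ((k : ℝ) + 1) ^ 2 ≤ t ^ 2 := by nlinarith
    exact le_trans (min_le_right _ _) this

lemma core_bound {a C₀ : ℝ} (ha : 0 < a) (c : ℝ) (g : ℝ → ℝ) (hg0 : ∀ x, 0 ≤ g x)
    (hgm : Measurable g)
    (hgr : ∀ z : ℝ, ∫⁻ x in Set.Icc (z - 1 / 2) (z + 1 / 2), ENNReal.ofReal (g x)
      ≤ ENNReal.ofReal C₀) :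
    ∫⁻ u : ℝ, ENNReal.ofReal (g u * Real.exp (-(a * (u - c) ^ 2) / 2))
      ≤ ENNReal.ofReal C₀ * eK a := by
  set s : ℤ → Set ℝ := fun k => Set.Ico (c + k) (c + k + 1) with hs
  have hcover : (Set.univ : Set ℝ) = ⋃ k : ℤ, s k := by
    ext u
    simp only [Set.mem_univ, Set.mem_iUnion, hs, Set.mem_Ico, true_iff]
    refine ⟨⌊u - c⌋, by linarith [Int.floor_le (u - c)], by linarith [Int.lt_floor_add_one (u - c)]⟩
  have hdisj : Pairwise (Function.onFun Disjoint s) := by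
    intro i j hij
    simp only [Function.onFun, hs, Set.disjoint_left, Set.mem_Ico]
    rintro u ⟨h1, h2⟩ ⟨h3, h4⟩
    apply hij
    have hi : (i : ℝ) < j + 1 := by linarith
    have hj : (j : ℝ) < i + 1 := by linarith
    have hi' : i < j + 1 := by exact_mod_cast hi
    have hj' : j < i + 1 := by exact_mod_cast hj
    omega
  have hmeas : ∀ k : ℤ, MeasurableSet (s k) := fun k => measurableSet_Ico
  calc ∫⁻ u : ℝ, ENNReal.ofReal (g u * Real.exp (-(a * (u - c) ^ 2) / 2))
      = ∫⁻ u in ⋃ k : ℤ, s k, ENNReal.ofReal (g u * Real.exp (-(a * (u - c) ^ 2) / 2)) := by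
        rw [← hcover, Measure.restrict_univ]
    _ = ∑' k : ℤ, ∫⁻ u in s k, ENNReal.ofReal (g u * Real.exp (-(a * (u - c) ^ 2) / 2)) :=
        lintegral_iUnion hmeas hdisj _
    _ ≤ ∑' k : ℤ, ENNReal.ofReal (Real.exp (-(a * min ((k : ℝ) ^ 2) (((k : ℝ) + 1) ^ 2)) / 2))
          * ENNReal.ofReal C₀ := by
        refine ENNReal.tsum_le_tsum fun k => ?_
        have step1 : ∫⁻ u in s k, ENNReal.ofReal (g u * Real.exp (-(a * (u - c) ^ 2) / 2))
            ≤ ∫⁻ u in s k, ENNReal.ofReal (Real.exp (-(a * min ((k : ℝ) ^ 2) (((k : ℝ) + 1) ^ 2)) / 2))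
                * ENNReal.ofReal (g u) := by
          refine setLIntegral_mono (by fun_prop) fun u hu => ?_
          rw [← ENNReal.ofReal_mul (Real.exp_nonneg _)]
          apply ENNReal.ofReal_le_ofReal
          rw [mul_comm]
          apply mul_le_mul_of_nonneg_right _ (hg0 u)
          apply Real.exp_le_exp.2
          simp only [hs, Set.mem_Ico] at hu
          have := interval_sq_bound k (u - c) (by linarith [hu.1]) (by linarith [hu.2])
          have h2 : a * min ((k : ℝ) ^ 2) (((k : ℝ) + 1) ^ 2) ≤ a * (u - c) ^ 2 :=
            mul_le_mul_of_nonneg_left this ha.le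
          linarith
        refine le_trans step1 ?_
        rw [lintegral_const_mul' _ _ ENNReal.ofReal_ne_top]
        apply mul_le_mul_right _ _
        refine le_trans (lintegral_mono_set ?_) (hgr (c + k + 1 / 2))
        intro u hu
        simp only [hs, Set.mem_Ico] at hu
        constructor <;> [linarith [hu.1]; linarith [hu.2]]
    _ = ENNReal.ofReal C₀ * eK a := by
        rw [ENNReal.tsum_mul_right, eK, mul_comm]

theorem stmt_17 (a : ℝ) (ha : 0 < a) (ha1 : a < 1) (C₀ : ℝ)
    (f : ℝ → ℝ) (hf_nonneg : ∀ x, 0 ≤ f x) (hf_meas : Measurable f)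
    (hgrow : ∀ z : ℝ,
      ∫⁻ x in Set.Icc (z - 1 / 2) (z + 1 / 2),
          ENNReal.ofReal (Real.exp ((1 - a) * (a * x) ^ 2 / (2 * a)) * f (a * x))
        ≤ ENNReal.ofReal C₀)
    (φ : ℝ → ℂ) (hφ_meas : Measurable φ)
    (hφ_int : ∫⁻ y : ℝ, ENNReal.ofReal (‖φ y‖ * Real.exp (-(1 - a) * y ^ 2 / 2)) < ⊤) :
    Integrable (fun p : ℝ × ℝ =>
        ((f p.1 * Real.sign (p.1 - a * p.2) * Real.exp (-(p.1 - p.2) ^ 2 / 2) : ℝ) : ℂ) * φ p.2)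
      (volume.prod volume) ∧
    ∫ y : ℝ, ((∫ x, f x * Real.sign (x - a * y) * Real.exp (-(x - y) ^ 2 / 2) : ℝ) : ℂ) * φ y
      = ∫ x : ℝ, ((f x : ℝ) : ℂ) *
          ∫ y : ℝ, ((Real.sign (x - a * y) * Real.exp (-(x - y) ^ 2 / 2) : ℝ) : ℂ) * φ y := by
  have ha' : a ≠ 0 := ha.ne'
  set ft : ℝ → ℝ := fun t => Real.exp ((1 - a) * t ^ 2 / (2 * a)) * f t with hft
  have hft_meas : Measurable ft := by
    apply Measurable.mul _ hf_meas
    exact Real.continuous_exp.measurable.comp (by fun_prop)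
  have hft0 : ∀ t, 0 ≤ ft t := fun t => mul_nonneg (Real.exp_nonneg _) (hf_nonneg t)
  set g : ℝ → ℝ := fun u => ft (a * u) with hgdef
  have hgm : Measurable g := hft_meas.comp (measurable_const_mul a)
  have hg0 : ∀ u, 0 ≤ g u := fun u => hft0 _
  have hgr : ∀ z : ℝ, ∫⁻ x in Set.Icc (z - 1 / 2) (z + 1 / 2), ENNReal.ofReal (g x)
      ≤ ENNReal.ofReal C₀ := fun z => hgrow z
  -- the kernel identity
  have hker : ∀ x y : ℝ, f x * Real.exp (-(x - y) ^ 2 / 2)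
      = Real.exp (-(1 - a) * y ^ 2 / 2) * (ft x * Real.exp (-((x - a * y) ^ 2) / (2 * a))) := by
    intro x y
    have hexp : Real.exp (-(1 - a) * y ^ 2 / 2) * (Real.exp ((1 - a) * x ^ 2 / (2 * a))
        * Real.exp (-((x - a * y) ^ 2) / (2 * a))) = Real.exp (-(x - y) ^ 2 / 2) := by
      rw [← Real.exp_add, ← Real.exp_add]
      congr 1
      field_simp
      ring
    calc f x * Real.exp (-(x - y) ^ 2 / 2)
        = f x * (Real.exp (-(1 - a) * y ^ 2 / 2) * (Real.exp ((1 - a) * x ^ 2 / (2 * a))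
            * Real.exp (-((x - a * y) ^ 2) / (2 * a)))) := by rw [hexp]
      _ = Real.exp (-(1 - a) * y ^ 2 / 2) * (ft x * Real.exp (-((x - a * y) ^ 2) / (2 * a))) := by
            rw [hft]; ring
  -- constant
  set Ca : ENNReal := ENNReal.ofReal a * (ENNReal.ofReal C₀ * eK a) with hCa
  have hCa_ne_top : Ca ≠ ⊤ := by
    rw [hCa]
    exact (ENNReal.mul_lt_top ENNReal.ofReal_lt_top
      (ENNReal.mul_lt_top ENNReal.ofReal_lt_top (eK_lt_top ha))).ne
  -- the key x-integral bound
  have key : ∀ y : ℝ, ∫⁻ x : ℝ, ENNReal.ofReal (f x * Real.exp (-(x - y) ^ 2 / 2))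
      ≤ ENNReal.ofReal (Real.exp (-(1 - a) * y ^ 2 / 2)) * Ca := by
    intro y
    have h1 : ∀ x : ℝ, ENNReal.ofReal (f x * Real.exp (-(x - y) ^ 2 / 2))
        = ENNReal.ofReal (Real.exp (-(1 - a) * y ^ 2 / 2))
          * ENNReal.ofReal (ft x * Real.exp (-((x - a * y) ^ 2) / (2 * a))) := by
      intro x
      rw [← ENNReal.ofReal_mul (Real.exp_nonneg _), hker x y]
    simp_rw [h1]
    rw [lintegral_const_mul' _ _ ENNReal.ofReal_ne_top]
    apply mul_le_mul_right
    have hmeas2 : Measurable fun x : ℝ =>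
        ENNReal.ofReal (ft x * Real.exp (-((x - a * y) ^ 2) / (2 * a))) := by
      apply ENNReal.measurable_ofReal.comp
      exact hft_meas.mul (Real.continuous_exp.measurable.comp (by fun_prop))
    rw [cov_scale ha _ hmeas2, hCa]
    apply mul_le_mul_right
    have h2 : ∀ u : ℝ, ENNReal.ofReal (ft (a * u) * Real.exp (-((a * u - a * y) ^ 2) / (2 * a)))
        = ENNReal.ofReal (g u * Real.exp (-(a * (u - y) ^ 2) / 2)) := by
      intro u
      congr 2
      congr 1
      field_simp
    simp_rw [h2]
    exact core_bound ha y g hg0 hgm hgr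
  -- Integrability
  set F : ℝ × ℝ → ℂ := fun p =>
    ((f p.1 * Real.sign (p.1 - a * p.2) * Real.exp (-(p.1 - p.2) ^ 2 / 2) : ℝ) : ℂ) * φ p.2
    with hF
  have hFmeas : Measurable F := by
    apply Measurable.mul _ (hφ_meas.comp measurable_snd)
    apply Complex.measurable_ofReal.comp
    apply Measurable.mul
    · exact (hf_meas.comp measurable_fst).mul
        (measurable_realSign.comp (measurable_fst.sub (measurable_snd.const_mul a)))
    · exact Real.continuous_exp.measurable.comp (by fun_prop)
  set B : ℝ × ℝ → ENNReal := fun p =>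
    ENNReal.ofReal (f p.1 * Real.exp (-(p.1 - p.2) ^ 2 / 2)) * ENNReal.ofReal ‖φ p.2‖ with hB
  have hBmeas : Measurable B := by
    refine Measurable.mul (f := fun p : ℝ × ℝ => ENNReal.ofReal (f p.1 * Real.exp (-(p.1 - p.2) ^ 2 / 2)))
      (g := fun p : ℝ × ℝ => ENNReal.ofReal ‖φ p.2‖) ?_ ?_
    · apply ENNReal.measurable_ofReal.comp
      exact (hf_meas.comp measurable_fst).mul
        (Real.continuous_exp.measurable.comp (by fun_prop))
    · exact ENNReal.measurable_ofReal.comp ((hφ_meas.comp measurable_snd).norm)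
  have hbound : ∀ p : ℝ × ℝ, (‖F p‖₊ : ENNReal) ≤ B p := by
    intro p
    rw [← enorm_eq_nnnorm, ← ofReal_norm, hF, hB]
    simp only [norm_mul, Complex.norm_real, Real.norm_eq_abs]
    rw [← ENNReal.ofReal_mul (mul_nonneg (hf_nonneg _) (Real.exp_nonneg _))]
    apply ENNReal.ofReal_le_ofReal
    apply mul_le_mul_of_nonneg_right _ (norm_nonneg _)
    rw [abs_of_nonneg (hf_nonneg _), abs_of_nonneg (Real.exp_nonneg _)]
    calc f p.1 * |Real.sign (p.1 - a * p.2)| * Real.exp (-(p.1 - p.2) ^ 2 / 2)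
        ≤ f p.1 * 1 * Real.exp (-(p.1 - p.2) ^ 2 / 2) := by
          apply mul_le_mul_of_nonneg_right _ (Real.exp_nonneg _)
          exact mul_le_mul_of_nonneg_left (abs_realSign_le_one _) (hf_nonneg _)
      _ = f p.1 * Real.exp (-(p.1 - p.2) ^ 2 / 2) := by ring
  have hInt : Integrable F (volume.prod volume) := by
    refine ⟨hFmeas.aestronglyMeasurable, ?_⟩
    rw [HasFiniteIntegral]
    calc ∫⁻ p, (‖F p‖₊ : ENNReal) ∂(volume.prod volume)
        ≤ ∫⁻ p, B p ∂(volume.prod volume) := lintegral_mono hbound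
      _ = ∫⁻ y, ∫⁻ x, B (x, y) := lintegral_prod_symm B hBmeas.aemeasurable
      _ ≤ ∫⁻ y : ℝ, Ca * ENNReal.ofReal (‖φ y‖ * Real.exp (-(1 - a) * y ^ 2 / 2)) := by
          apply lintegral_mono
          intro y
          calc ∫⁻ x, B (x, y)
              = (∫⁻ x, ENNReal.ofReal (f x * Real.exp (-(x - y) ^ 2 / 2)))
                  * ENNReal.ofReal ‖φ y‖ := by
                simp only [hB]
                exact lintegral_mul_const _
                  (by fun_prop : Measurable fun x : ℝ =>
                    ENNReal.ofReal (f x * Real.exp (-(x - y) ^ 2 / 2)))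
            _ ≤ (ENNReal.ofReal (Real.exp (-(1 - a) * y ^ 2 / 2)) * Ca)
                  * ENNReal.ofReal ‖φ y‖ := mul_le_mul_left (key y) _
            _ = Ca * ENNReal.ofReal (‖φ y‖ * Real.exp (-(1 - a) * y ^ 2 / 2)) := by
                rw [ENNReal.ofReal_mul (norm_nonneg _)]
                ring
      _ = Ca * ∫⁻ y : ℝ, ENNReal.ofReal (‖φ y‖ * Real.exp (-(1 - a) * y ^ 2 / 2)) :=
          lintegral_const_mul' _ _ hCa_ne_top
      _ < ⊤ := ENNReal.mul_lt_top hCa_ne_top.lt_top hφ_int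
  refine ⟨hInt, ?_⟩
  -- Fubini
  set H : ℝ → ℝ → ℂ := fun x y =>
    ((f x * Real.sign (x - a * y) * Real.exp (-(x - y) ^ 2 / 2) : ℝ) : ℂ) * φ y with hH
  have hHint : Integrable (Function.uncurry H) (volume.prod volume) := hInt
  have hswap := integral_integral_swap hHint
  have hL : ∀ y : ℝ,
      ((∫ x, f x * Real.sign (x - a * y) * Real.exp (-(x - y) ^ 2 / 2) : ℝ) : ℂ) * φ y
        = ∫ x, H x y := by
    intro y
    have : ∀ x : ℝ, H x y
        = (f x * Real.sign (x - a * y) * Real.exp (-(x - y) ^ 2 / 2)) • φ y := by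
      intro x
      rw [hH, Complex.real_smul]
    simp_rw [this]
    rw [integral_smul_const, Complex.real_smul]
  have hR : ∀ x : ℝ, ((f x : ℝ) : ℂ)
      * ∫ y, ((Real.sign (x - a * y) * Real.exp (-(x - y) ^ 2 / 2) : ℝ) : ℂ) * φ y
        = ∫ y, H x y := by
    intro x
    rw [← integral_const_mul]
    congr 1
    funext y
    rw [hH]
    push_cast
    ring
  calc ∫ y : ℝ, ((∫ x, f x * Real.sign (x - a * y) * Real.exp (-(x - y) ^ 2 / 2) : ℝ) : ℂ) * φ y
      = ∫ y : ℝ, ∫ x : ℝ, H x y := by exact congrArg _ (funext hL)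
    _ = ∫ x : ℝ, ∫ y : ℝ, H x y := hswap.symm
    _ = ∫ x : ℝ, ((f x : ℝ) : ℂ) *
          ∫ y : ℝ, ((Real.sign (x - a * y) * Real.exp (-(x - y) ^ 2 / 2) : ℝ) : ℂ) * φ y := by
        exact (congrArg _ (funext hR)).symm
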